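/- arXiv:1812.09224 — 3 statements merged into one kernel-verified Lean document; each statement's English description precedes it below -/
import Mathlib

section
/- Let 𝒞 = ⋃_{k=1}^ℓ B̄(y_k, s) be a nondegenerate geometric complex in ℝ^d, let Z be a topological space, and let 0 < r < R. Then ∫_{B(0,R−r)} 𝒩(𝒞, B(x, r); [Z]) / Vol(B(0,r)) dx ≤ 𝒩(𝒞, B(0,R); [Z]) ≤ ∫_{B(0,R+r)} 𝒩*(𝒞, B(x, r); [Z]) / Vol(B(0,r)) dx, where the integrals are with respect to Lebesgue measure in x. -/
open Metric MeasureTheory Filter Topology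

noncomputable section

/-- Euclidean space `ℝ^d`. -/
abbrev Euc (d : ℕ) := EuclideanSpace ℝ (Fin d)

/-- `C` is a connected component of `Y` (with the subspace topology), viewed as a
subset of the ambient space. -/
def IsCompOf {d : ℕ} (Y C : Set (Euc d)) : Prop :=
  ∃ x ∈ Y, C = connectedComponentIn Y x

/-- The number of connected components of `Y₁` contained in the interior of `Y₂`. -/
noncomputable def compCount {d : ℕ} (Y₁ Y₂ : Set (Euc d)) : ℕ :=
  {C : Set (Euc d) | IsCompOf Y₁ C ∧ C ⊆ interior Y₂}.ncard

/-- The number of connected components of `Y₁` contained in the interior of `Y₂`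
and homotopy equivalent to `Z`. -/
noncomputable def compCountType {d : ℕ} (Y₁ Y₂ : Set (Euc d))
    (Z : Type*) [TopologicalSpace Z] : ℕ :=
  {C : Set (Euc d) | IsCompOf Y₁ C ∧ C ⊆ interior Y₂ ∧
    Nonempty (ContinuousMap.HomotopyEquiv C Z)}.ncard

/-- The number of connected components of `Y₁` intersecting `Y₂`
and homotopy equivalent to `Z`. -/
noncomputable def compCountTypeStar {d : ℕ} (Y₁ Y₂ : Set (Euc d))
    (Z : Type*) [TopologicalSpace Z] : ℕ :=
  {C : Set (Euc d) | IsCompOf Y₁ C ∧ (C ∩ Y₂).Nonempty ∧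
    Nonempty (ContinuousMap.HomotopyEquiv C Z)}.ncard

/-- The number of connected components of `Y₁` intersecting `Y₂`. -/
noncomputable def compCountStar {d : ℕ} (Y₁ Y₂ : Set (Euc d)) : ℕ :=
  {C : Set (Euc d) | IsCompOf Y₁ C ∧ (C ∩ Y₂).Nonempty}.ncard

/-- A geometric complex in `ℝ^d`: a finite union of closed balls of a common radius. -/
def IsGeomComplex {d : ℕ} (Z : Set (Euc d)) : Prop :=
  ∃ (ℓ : ℕ) (y : Fin ℓ → Euc d) (r : ℝ), 0 < r ∧ Z = ⋃ k, closedBall (y k) r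

/-- Nondegeneracy of the family of closed balls of radius `s` centered at `y 1, …, y ℓ`. -/
def Nondeg {d ℓ : ℕ} (y : Fin ℓ → Euc d) (s : ℝ) : Prop :=
  ∀ J : Finset (Fin ℓ), J.Nonempty → ∀ x : Euc d,
    (∀ j ∈ J, dist x (y j) = s) →
      LinearIndependent ℝ (fun j : J => x - y (j : Fin ℓ))

/-- A nondegenerate geometric complex in `ℝ^d`. -/
def IsNondegGeomComplex {d : ℕ} (Z : Set (Euc d)) : Prop :=
  ∃ (ℓ : ℕ) (y : Fin ℓ → Euc d) (r : ℝ), 0 < r ∧ Z = ⋃ k, closedBall (y k) r ∧ Nondeg y r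

/-- A unit-intensity Poisson point process on `ℝ^d`, defined on the probability
space `(Ω, ℙ)`. -/
structure PoissonPP (d : ℕ) {Ω : Type*} [MeasurableSpace Ω] (ℙ : Measure Ω) where
  /-- the random set of points -/
  pts : Ω → Set (Euc d)
  /-- the point set is locally finite -/
  locFin : ∀ ω : Ω, ∀ s : Set (Euc d), Bornology.IsBounded s → (pts ω ∩ s).Finite
  /-- the number of points in a finite-volume Borel set is Poisson distributed with
  mean the volume of the set -/
  poisson : ∀ A : Set (Euc d), MeasurableSet A → volume A ≠ ⊤ → ∀ k : ℕ,
    ℙ {ω | (pts ω ∩ A).ncard = k} =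
      ENNReal.ofReal
        (Real.exp (-(volume A).toReal) * (volume A).toReal ^ k / (Nat.factorial k))
  /-- the numbers of points in finitely many pairwise disjoint Borel sets are independent -/
  indep : ∀ (n : ℕ) (A : Fin n → Set (Euc d)), (∀ i, MeasurableSet (A i)) →
    (∀ i, volume (A i) ≠ ⊤) → Pairwise (Function.onFun Disjoint A) →
    ProbabilityTheory.iIndepFun
      (fun i ω => ((pts ω ∩ A i).ncard : ℕ)) ℙ

/-- The closed `α`-neighborhood of a point set `P`: the union of closed balls of
radius `α` centered at the points of `P`. -/
def nbhd {d : ℕ} (P : Set (Euc d)) (α : ℝ) : Set (Euc d) := ⋃ p ∈ P, closedBall p α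

end

section Aux

open Metric MeasureTheory

variable {d : ℕ}

lemma isOpen_subset_ball {K : Set (Euc d)} (hK : IsCompact K) (r : ℝ) :
    IsOpen {x : Euc d | K ⊆ ball x r} := by
  rw [Metric.isOpen_iff]
  intro x hx
  rcases K.eq_empty_or_nonempty with h | h
  · exact ⟨1, one_pos, fun x' _ => by simp [h]⟩
  · obtain ⟨p₀, hp₀K, hmax⟩ := hK.exists_isMaxOn h
      ((continuous_id.dist continuous_const).continuousOn : ContinuousOn (fun p => dist p x) K)
    have hp₀ : dist p₀ x < r := hx hp₀K
    refine ⟨r - dist p₀ x, by linarith, fun x' hx' p hp => ?_⟩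
    have h1 : dist p x ≤ dist p₀ x := hmax hp
    have h2 : dist x x' < r - dist p₀ x := by rw [dist_comm]; exact hx'
    calc dist p x' ≤ dist p x + dist x x' := dist_triangle _ _ _
      _ < dist p₀ x + (r - dist p₀ x) := by linarith
      _ = r := by ring

lemma isOpen_inter_ball_nonempty (K : Set (Euc d)) (r : ℝ) :
    IsOpen {x : Euc d | (K ∩ ball x r).Nonempty} := by
  have : {x : Euc d | (K ∩ ball x r).Nonempty} = ⋃ p ∈ K, ball p r := by
    ext x
    simp only [Set.mem_setOf_eq, Set.mem_iUnion, mem_ball, Set.Nonempty, Set.mem_inter_iff]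
    constructor
    · rintro ⟨p, hpK, hp⟩
      exact ⟨p, hpK, by rwa [dist_comm, ← mem_ball] at hp⟩
    · rintro ⟨p, hpK, hp⟩
      exact ⟨p, hpK, by rwa [dist_comm]⟩
  rw [this]
  exact isOpen_biUnion fun p _ => isOpen_ball

lemma comps_finite {ℓ : ℕ} (y : Fin ℓ → Euc d) {s : ℝ} (hs : 0 < s) :
    {C' : Set (Euc d) | IsCompOf (⋃ k, closedBall (y k) s) C'}.Finite := by
  set C := ⋃ k, closedBall (y k) s with hC
  apply Set.Finite.subset (Set.finite_range fun k => connectedComponentIn C (y k))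
  rintro C' ⟨x, hxC, rfl⟩
  obtain ⟨k, hk⟩ : ∃ k, x ∈ closedBall (y k) s := by
    simpa [hC] using hxC
  refine ⟨k, ?_⟩
  have hball : closedBall (y k) s ⊆ C := Set.subset_iUnion (fun k => closedBall (y k) s) k
  have hconn : IsPreconnected (closedBall (y k) s) := (convex_closedBall _ _).isPreconnected
  have hyk : y k ∈ connectedComponentIn C x :=
    hconn.subset_connectedComponentIn hk hball (mem_closedBall_self hs.le)
  exact (connectedComponentIn_eq hyk).symm

lemma comp_compact {Y C' : Set (Euc d)} (hY : IsCompact Y) (h : IsCompOf Y C') :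
    IsCompact C' := by
  obtain ⟨x, hx, rfl⟩ := h
  rw [connectedComponentIn_eq_image hx]
  have : CompactSpace Y := isCompact_iff_compactSpace.1 hY
  exact (isClosed_connectedComponent.isCompact).image continuous_subtype_val

lemma comp_nonempty {Y C' : Set (Euc d)} (h : IsCompOf Y C') : C'.Nonempty := by
  obtain ⟨x, hx, rfl⟩ := h
  exact ⟨x, mem_connectedComponentIn hx⟩

end Aux

/-- Integral Geometry Sandwich, with homotopy type. -/
theorem stmt_1 {d ℓ : ℕ} (y : Fin ℓ → Euc d) (s : ℝ) (hs : 0 < s)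
    (hnd : Nondeg y s) (Z : Type*) [TopologicalSpace Z]
    (r R : ℝ) (hr : 0 < r) (hrR : r < R) :
    (∫ x in ball (0 : Euc d) (R - r),
        (compCountType (⋃ k, closedBall (y k) s) (ball x r) Z : ℝ)
          / (volume (ball (0 : Euc d) r)).toReal)
      ≤ (compCountType (⋃ k, closedBall (y k) s) (ball (0 : Euc d) R) Z : ℝ) ∧
    (compCountType (⋃ k, closedBall (y k) s) (ball (0 : Euc d) R) Z : ℝ)
      ≤ ∫ x in ball (0 : Euc d) (R + r),
          (compCountTypeStar (⋃ k, closedBall (y k) s) (ball x r) Z : ℝ)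
            / (volume (ball (0 : Euc d) r)).toReal := by
  classical
  set C : Set (Euc d) := ⋃ k, closedBall (y k) s with hCdef
  have hCcpt : IsCompact C := isCompact_iUnion fun k => isCompact_closedBall _ _
  have hSZfin : {C' : Set (Euc d) | IsCompOf C C' ∧
      Nonempty (ContinuousMap.HomotopyEquiv C' Z)}.Finite :=
    (comps_finite y hs).subset fun C' h => h.1
  set SZ : Finset (Set (Euc d)) := hSZfin.toFinset with hSZdef
  have hmemSZ : ∀ C' : Set (Euc d), C' ∈ SZ ↔ IsCompOf C C' ∧
      Nonempty (ContinuousMap.HomotopyEquiv C' Z) := fun C' => hSZfin.mem_toFinset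
  set V : ℝ := (volume (ball (0 : Euc d) r)).toReal with hVdef
  have hVpos : 0 < V :=
    ENNReal.toReal_pos (measure_ball_pos volume 0 hr).ne' measure_ball_lt_top.ne
  set U : Set (Euc d) → Set (Euc d) := fun C' => {x | C' ⊆ ball x r} with hUdef
  set W : Set (Euc d) → Set (Euc d) := fun C' => {x | (C' ∩ ball x r).Nonempty} with hWdef
  have hUopen : ∀ C' ∈ SZ, IsOpen (U C') := fun C' h =>
    isOpen_subset_ball (comp_compact hCcpt ((hmemSZ C').1 h).1) r
  have hWopen : ∀ C' : Set (Euc d), IsOpen (W C') := fun C' => isOpen_inter_ball_nonempty C' r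
  set T : Finset (Set (Euc d)) := SZ.filter (fun C' => C' ⊆ ball (0 : Euc d) R) with hTdef
  -- count at radius R
  have hTcount : compCountType C (ball (0 : Euc d) R) Z = T.card := by
    have hseteq : {C'' : Set (Euc d) | IsCompOf C C'' ∧ C'' ⊆ interior (ball (0 : Euc d) R) ∧
        Nonempty (ContinuousMap.HomotopyEquiv C'' Z)} = ↑T := by
      ext C''
      simp only [hTdef, Finset.coe_filter, Set.mem_setOf_eq, Finset.mem_coe, hmemSZ,
        isOpen_ball.interior_eq]
      tauto
    rw [compCountType, hseteq, Set.ncard_coe_finset]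
  -- pointwise identities
  have hptU : ∀ x : Euc d, (compCountType C (ball x r) Z : ℝ)
      = ∑ C' ∈ SZ, (U C').indicator (fun _ => (1 : ℝ)) x := by
    intro x
    have hseteq : {C'' : Set (Euc d) | IsCompOf C C'' ∧ C'' ⊆ interior (ball x r) ∧
        Nonempty (ContinuousMap.HomotopyEquiv C'' Z)}
        = ↑(SZ.filter fun C' => x ∈ U C') := by
      ext C''
      simp only [Finset.coe_filter, Set.mem_setOf_eq, Finset.mem_coe, hmemSZ,
        isOpen_ball.interior_eq, hUdef]
      tauto
    rw [compCountType, hseteq, Set.ncard_coe_finset]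
    simp only [Set.indicator_apply]
    rw [Finset.sum_boole]
  have hptW : ∀ x : Euc d, (compCountTypeStar C (ball x r) Z : ℝ)
      = ∑ C' ∈ SZ, (W C').indicator (fun _ => (1 : ℝ)) x := by
    intro x
    have hseteq : {C'' : Set (Euc d) | IsCompOf C C'' ∧ (C'' ∩ ball x r).Nonempty ∧
        Nonempty (ContinuousMap.HomotopyEquiv C'' Z)}
        = ↑(SZ.filter fun C' => x ∈ W C') := by
      ext C''
      simp only [Finset.coe_filter, Set.mem_setOf_eq, Finset.mem_coe, hmemSZ, hWdef]
      tauto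
    rw [compCountTypeStar, hseteq, Set.ncard_coe_finset]
    simp only [Set.indicator_apply]
    rw [Finset.sum_boole]
  -- integrability and integral of indicators
  have hindint : ∀ (ρ : ℝ) (A : Set (Euc d)), IsOpen A →
      IntegrableOn (A.indicator fun _ => (1 : ℝ)) (ball (0 : Euc d) ρ) volume := by
    intro ρ A hA
    rw [IntegrableOn, integrable_indicator_iff hA.measurableSet]
    refine integrableOn_const (LT.lt.ne ?_) (by simp)
    calc (volume.restrict (ball (0 : Euc d) ρ)) A
        = volume (A ∩ ball (0 : Euc d) ρ) := Measure.restrict_apply hA.measurableSet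
      _ ≤ volume (ball (0 : Euc d) ρ) := measure_mono Set.inter_subset_right
      _ < ⊤ := measure_ball_lt_top
  have hintind : ∀ (ρ : ℝ) (A : Set (Euc d)), IsOpen A →
      ∫ x in ball (0 : Euc d) ρ, A.indicator (fun _ => (1 : ℝ)) x
        = (volume (A ∩ ball (0 : Euc d) ρ)).toReal := by
    intro ρ A hA
    rw [integral_indicator hA.measurableSet, setIntegral_const,
      measureReal_def, Measure.restrict_apply hA.measurableSet, smul_eq_mul, mul_one]
  -- integral identities
  have hsumL : ∫ x in ball (0 : Euc d) (R - r), (compCountType C (ball x r) Z : ℝ) / V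
      = (∑ C' ∈ SZ, (volume (U C' ∩ ball (0 : Euc d) (R - r))).toReal) / V := by
    rw [integral_div]
    congr 1
    calc ∫ x in ball (0 : Euc d) (R - r), (compCountType C (ball x r) Z : ℝ)
        = ∫ x in ball (0 : Euc d) (R - r),
            ∑ C' ∈ SZ, (U C').indicator (fun _ => (1 : ℝ)) x := by simp_rw [hptU]
      _ = ∑ C' ∈ SZ, ∫ x in ball (0 : Euc d) (R - r), (U C').indicator (fun _ => (1 : ℝ)) x :=
          integral_finset_sum SZ fun C' hC' => hindint _ _ (hUopen C' hC')
      _ = ∑ C' ∈ SZ, (volume (U C' ∩ ball (0 : Euc d) (R - r))).toReal :=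
          Finset.sum_congr rfl fun C' hC' => hintind _ _ (hUopen C' hC')
  have hsumR : ∫ x in ball (0 : Euc d) (R + r), (compCountTypeStar C (ball x r) Z : ℝ) / V
      = (∑ C' ∈ SZ, (volume (W C' ∩ ball (0 : Euc d) (R + r))).toReal) / V := by
    rw [integral_div]
    congr 1
    calc ∫ x in ball (0 : Euc d) (R + r), (compCountTypeStar C (ball x r) Z : ℝ)
        = ∫ x in ball (0 : Euc d) (R + r),
            ∑ C' ∈ SZ, (W C').indicator (fun _ => (1 : ℝ)) x := by simp_rw [hptW]
      _ = ∑ C' ∈ SZ, ∫ x in ball (0 : Euc d) (R + r), (W C').indicator (fun _ => (1 : ℝ)) x :=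
          integral_finset_sum SZ fun C' _ => hindint _ _ (hWopen C')
      _ = ∑ C' ∈ SZ, (volume (W C' ∩ ball (0 : Euc d) (R + r))).toReal :=
          Finset.sum_congr rfl fun C' _ => hintind _ _ (hWopen C')
  -- the two sum bounds
  have hL : (∑ C' ∈ SZ, (volume (U C' ∩ ball (0 : Euc d) (R - r))).toReal) ≤ (T.card : ℝ) * V := by
    calc ∑ C' ∈ SZ, (volume (U C' ∩ ball (0 : Euc d) (R - r))).toReal
        ≤ ∑ C' ∈ SZ, (if C' ⊆ ball (0 : Euc d) R then V else 0) := by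
          refine Finset.sum_le_sum fun C' hC' => ?_
          by_cases hsub : C' ⊆ ball (0 : Euc d) R
          · rw [if_pos hsub]
            obtain ⟨p, hp⟩ := comp_nonempty ((hmemSZ C').1 hC').1
            have hsub2 : U C' ∩ ball (0 : Euc d) (R - r) ⊆ ball p r := by
              rintro x ⟨hxU, -⟩
              have : dist p x < r := hxU hp
              rwa [mem_ball, dist_comm]
            calc (volume (U C' ∩ ball (0 : Euc d) (R - r))).toReal
                ≤ (volume (ball p r)).toReal :=
                  ENNReal.toReal_mono measure_ball_lt_top.ne (measure_mono hsub2)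
              _ = V := by rw [hVdef, Measure.addHaar_ball_center]
          · rw [if_neg hsub]
            have hempty : U C' ∩ ball (0 : Euc d) (R - r) = ∅ := by
              rw [Set.eq_empty_iff_forall_notMem]
              rintro x ⟨hxU, hxB⟩
              have hx0 : dist x 0 < R - r := mem_ball.1 hxB
              exact hsub (Set.Subset.trans hxU (ball_subset_ball' (by linarith)))
            simp [hempty]
      _ = ∑ C' ∈ T, V := (Finset.sum_filter _ _).symm
      _ = (T.card : ℝ) * V := by rw [Finset.sum_const, nsmul_eq_mul]
  have hR : (T.card : ℝ) * V ≤ ∑ C' ∈ SZ, (volume (W C' ∩ ball (0 : Euc d) (R + r))).toReal := by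
    calc (T.card : ℝ) * V = ∑ C' ∈ T, V := by rw [Finset.sum_const, nsmul_eq_mul]
      _ ≤ ∑ C' ∈ T, (volume (W C' ∩ ball (0 : Euc d) (R + r))).toReal := by
          refine Finset.sum_le_sum fun C' hC' => ?_
          obtain ⟨hC'SZ, hsub⟩ := Finset.mem_filter.1 hC'
          obtain ⟨p, hp⟩ := comp_nonempty ((hmemSZ C').1 hC'SZ).1
          have hp0 : dist p 0 < R := mem_ball.1 (hsub hp)
          have hsub2 : ball p r ⊆ W C' ∩ ball (0 : Euc d) (R + r) := by
            intro x hx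
            refine ⟨⟨p, hp, ?_⟩, ball_subset_ball' (by linarith) hx⟩
            rw [mem_ball, dist_comm]
            exact mem_ball.1 hx
          have hfin : volume (W C' ∩ ball (0 : Euc d) (R + r)) ≠ ⊤ :=
            ((measure_mono Set.inter_subset_right).trans_lt measure_ball_lt_top).ne
          calc V = (volume (ball p r)).toReal := by
                rw [hVdef, ← Measure.addHaar_ball_center volume p r]
            _ ≤ (volume (W C' ∩ ball (0 : Euc d) (R + r))).toReal :=
                ENNReal.toReal_mono hfin (measure_mono hsub2)
      _ ≤ ∑ C' ∈ SZ, (volume (W C' ∩ ball (0 : Euc d) (R + r))).toReal :=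
          Finset.sum_le_sum_of_subset_of_nonneg (Finset.filter_subset _ _)
            (fun _ _ _ => ENNReal.toReal_nonneg)
  constructor
  · rw [hsumL, hTcount]
    exact (div_le_iff₀ hVpos).2 hL
  · rw [hsumR, hTcount]
    exact (le_div_iff₀ hVpos).2 hR
end

section
/- Let 𝒞 = ⋃_{k=1}^ℓ B̄(y_k, s) be a nondegenerate geometric complex in ℝ^d and let 0 < r < R. Then ∫_{B(0,R−r)} 𝒩(𝒞, B(x, r)) / Vol(B(0,r)) dx ≤ 𝒩(𝒞, B(0,R)) ≤ ∫_{B(0,R+r)} 𝒩*(𝒞, B(x, r)) / Vol(B(0,r)) dx, where 𝒩 and 𝒩* count all connected components (with no restriction on homotopy type) and the integrals are with respect to Lebesgue measure in x. -/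
open Metric MeasureTheory Filter Topology

section Aux

open Metric MeasureTheory Filter Topology Set

variable {d ℓ : ℕ} {y : Fin ℓ → Euc d} {s : ℝ}

lemma aux_comp_nonempty {Y C : Set (Euc d)} (h : IsCompOf Y C) : C.Nonempty := by
  obtain ⟨x, hx, rfl⟩ := h
  exact ⟨x, mem_connectedComponentIn hx⟩

lemma aux_comp_compact {C : Set (Euc d)}
    (h : IsCompOf (⋃ k, closedBall (y k) s) C) : IsCompact C := by
  obtain ⟨x, hx, rfl⟩ := h
  have hK : IsCompact (⋃ k, closedBall (y k) s) :=
    isCompact_iUnion fun k => isCompact_closedBall _ _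
  have : CompactSpace (⋃ k, closedBall (y k) s) := isCompact_iff_compactSpace.mp hK
  rw [connectedComponentIn_eq_image hx]
  exact (isClosed_connectedComponent.isCompact).image continuous_subtype_val

lemma aux_comps_finite (hs0 : 0 ≤ s) :
    {C : Set (Euc d) | IsCompOf (⋃ k, closedBall (y k) s) C}.Finite := by
  apply Set.Finite.subset (Set.finite_range
    (fun k => connectedComponentIn (⋃ k, closedBall (y k) s) (y k)))
  rintro C ⟨x, hx, rfl⟩
  obtain ⟨_, ⟨k, rfl⟩, hxk⟩ := hx
  refine ⟨k, ?_⟩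
  have hsub : closedBall (y k) s ⊆ ⋃ k, closedBall (y k) s :=
    subset_iUnion (fun k => closedBall (y k) s) k
  have hball : closedBall (y k) s ⊆ connectedComponentIn (⋃ k, closedBall (y k) s) x :=
    (convex_closedBall (y k) s).isPreconnected.subset_connectedComponentIn hxk hsub
  exact (connectedComponentIn_eq (hball (mem_closedBall_self hs0))).symm

lemma aux_isOpen_U {C : Set (Euc d)} (hC : IsCompact C) (r : ℝ) :
    IsOpen {x : Euc d | C ⊆ ball x r} := by
  rcases C.eq_empty_or_nonempty with rfl | hne
  · simp [isOpen_const]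
  rw [Metric.isOpen_iff]
  intro x hx
  obtain ⟨q0, hq0, hmax⟩ := hC.exists_isMaxOn hne (continuous_const.dist continuous_id).continuousOn
  refine ⟨r - dist x q0, by simpa [dist_comm] using hx hq0, ?_⟩
  intro x' hx' q hq
  have h1 : dist x q ≤ dist x q0 := hmax hq
  have : dist x' q ≤ dist x' x + dist x q := dist_triangle _ _ _
  simp only [mem_ball] at hx' ⊢
  rw [dist_comm] at hx'
  rw [dist_comm q x']
  have h3 : dist x' x = dist x x' := dist_comm _ _
  linarith

end Aux


open Metric MeasureTheory Filter Topology Set in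
/-- Integral Geometry Sandwich, all components. -/
theorem stmt_2 {d ℓ : ℕ} (y : Fin ℓ → Euc d) (s : ℝ) (hs : 0 < s)
    (hnd : Nondeg y s)
    (r R : ℝ) (hr : 0 < r) (hrR : r < R) :
    (∫ x in ball (0 : Euc d) (R - r),
        (compCount (⋃ k, closedBall (y k) s) (ball x r) : ℝ)
          / (volume (ball (0 : Euc d) r)).toReal)
      ≤ (compCount (⋃ k, closedBall (y k) s) (ball (0 : Euc d) R) : ℝ) ∧
    (compCount (⋃ k, closedBall (y k) s) (ball (0 : Euc d) R) : ℝ)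
      ≤ ∫ x in ball (0 : Euc d) (R + r),
          (compCountStar (⋃ k, closedBall (y k) s) (ball x r) : ℝ)
            / (volume (ball (0 : Euc d) r)).toReal := by
  classical
  have hs0 : (0:ℝ) ≤ s := hs.le
  set 𝒞 := ⋃ k, closedBall (y k) s with h𝒞
  have hF : {C : Set (Euc d) | IsCompOf 𝒞 C}.Finite := aux_comps_finite hs0
  set F : Finset (Set (Euc d)) := hF.toFinset with hFdef
  have hmemF : ∀ C, C ∈ F ↔ IsCompOf 𝒞 C := fun C => hF.mem_toFinset
  set V := (volume (ball (0 : Euc d) r)).toReal with hV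
  have hVpos : 0 < V :=
    ENNReal.toReal_pos (measure_ball_pos volume 0 hr).ne' measure_ball_lt_top.ne
  have hballvol : ∀ p : Euc d, volume (ball p r) = volume (ball (0:Euc d) r) := fun p =>
    Measure.addHaar_ball_center volume p r
  -- counting identities
  have hcount : ∀ (z : Euc d) (ρ : ℝ), compCount 𝒞 (ball z ρ) =
      (F.filter (fun C => C ⊆ ball z ρ)).card := by
    intro z ρ
    rw [compCount]
    have h : {C : Set (Euc d) | IsCompOf 𝒞 C ∧ C ⊆ interior (ball z ρ)} =
        ↑(F.filter (fun C => C ⊆ ball z ρ)) := by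
      ext C
      simp [hmemF, isOpen_ball.interior_eq]
    rw [h, Set.ncard_coe_finset]
  have hcountStar : ∀ z : Euc d, compCountStar 𝒞 (ball z r) =
      (F.filter (fun C => (C ∩ ball z r).Nonempty)).card := by
    intro z
    rw [compCountStar]
    have h : {C : Set (Euc d) | IsCompOf 𝒞 C ∧ (C ∩ ball z r).Nonempty} =
        ↑(F.filter (fun C => (C ∩ ball z r).Nonempty)) := by
      ext C; simp [hmemF]
    rw [h, Set.ncard_coe_finset]
  have hUmeas : ∀ C ∈ F, MeasurableSet {x : Euc d | C ⊆ ball x r} := fun C hC =>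
    (aux_isOpen_U (aux_comp_compact ((hmemF C).mp hC)) r).measurableSet
  have hW : ∀ C : Set (Euc d), {x : Euc d | (C ∩ ball x r).Nonempty} = Metric.thickening r C := by
    intro C; ext x
    simp only [mem_setOf_eq, Metric.mem_thickening_iff, Set.Nonempty, mem_inter_iff, mem_ball]
    constructor
    · rintro ⟨p, hp, hd⟩; exact ⟨p, hp, by rwa [dist_comm]⟩
    · rintro ⟨p, hp, hd⟩; exact ⟨p, hp, by rwa [dist_comm]⟩
  have hWmeas : ∀ C : Set (Euc d), MeasurableSet {x : Euc d | (C ∩ ball x r).Nonempty} := by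
    intro C; rw [hW C]; exact Metric.isOpen_thickening.measurableSet
  -- cast counting identities to ℝ with indicators
  have hcountR : ∀ x : Euc d, (compCount 𝒞 (ball x r) : ℝ) =
      ∑ C ∈ F, ({x' : Euc d | C ⊆ ball x' r}.indicator (fun _ => (1:ℝ)) x) := by
    intro x
    rw [hcount x r, Finset.card_filter]
    push_cast
    refine Finset.sum_congr rfl fun C _ => ?_
    simp [Set.indicator_apply]
  have hcountStarR : ∀ x : Euc d, (compCountStar 𝒞 (ball x r) : ℝ) =
      ∑ C ∈ F, ({x' : Euc d | (C ∩ ball x' r).Nonempty}.indicator (fun _ => (1:ℝ)) x) := by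
    intro x
    rw [hcountStar x, Finset.card_filter]
    push_cast
    refine Finset.sum_congr rfl fun C _ => ?_
    simp [Set.indicator_apply]
  -- the number of components inside ball 0 R, times V, as a filtered sum
  have hNV : (compCount 𝒞 (ball (0:Euc d) R) : ℝ) * V =
      ∑ C ∈ F.filter (fun C => C ⊆ ball (0:Euc d) R), V := by
    rw [hcount 0 R, Finset.sum_const, nsmul_eq_mul]
  constructor
  · -- lower bound
    have hAvol : volume (ball (0:Euc d) (R - r)) < ⊤ := measure_ball_lt_top
    have hint : ∀ C ∈ F, IntegrableOn
        (fun x => ({x' : Euc d | C ⊆ ball x' r}.indicator (fun _ => (1:ℝ)) x))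
        (ball (0:Euc d) (R - r)) volume := fun C hC =>
      (integrableOn_const hAvol.ne).indicator (hUmeas C hC)
    have hI : ∫ x in ball (0:Euc d) (R - r), (compCount 𝒞 (ball x r) : ℝ) =
        ∑ C ∈ F, (volume ({x' : Euc d | C ⊆ ball x' r} ∩ ball (0:Euc d) (R - r))).toReal := by
      rw [integral_congr_ae (Eventually.of_forall hcountR)]
      rw [integral_finset_sum F hint]
      refine Finset.sum_congr rfl fun C hC => ?_
      rw [integral_indicator_const (1:ℝ) (hUmeas C hC), measureReal_def, Measure.restrict_apply (hUmeas C hC),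
        smul_eq_mul, mul_one]
    have hbound : ∑ C ∈ F, (volume ({x' : Euc d | C ⊆ ball x' r} ∩ ball (0:Euc d) (R - r))).toReal
        ≤ (compCount 𝒞 (ball (0:Euc d) R) : ℝ) * V := by
      rw [hNV, Finset.sum_filter]
      apply Finset.sum_le_sum
      intro C hC
      by_cases hCR : C ⊆ ball (0:Euc d) R
      · simp only [if_pos hCR]
        obtain ⟨p, hp⟩ := aux_comp_nonempty ((hmemF C).mp hC)
        have hsub : {x' : Euc d | C ⊆ ball x' r} ∩ ball (0:Euc d) (R - r) ⊆ ball p r := by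
          rintro x ⟨hx1, -⟩
          have := hx1 hp
          simp only [mem_ball] at this ⊢
          rwa [dist_comm]
        calc (volume ({x' : Euc d | C ⊆ ball x' r} ∩ ball (0:Euc d) (R - r))).toReal
            ≤ (volume (ball p r)).toReal :=
              ENNReal.toReal_mono measure_ball_lt_top.ne (measure_mono hsub)
          _ = V := by rw [hV, hballvol p]
      · simp only [if_neg hCR]
        have hempty : {x' : Euc d | C ⊆ ball x' r} ∩ ball (0:Euc d) (R - r) = ∅ := by
          ext x
          simp only [mem_inter_iff, mem_setOf_eq, mem_empty_iff_false, iff_false, not_and]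
          intro hx1 hx2
          apply hCR
          intro q hq
          have h1 : dist q x < r := by simpa [mem_ball] using hx1 hq
          have h2 : dist x 0 < R - r := by simpa [mem_ball] using hx2
          have h3 : dist q 0 ≤ dist q x + dist x 0 := dist_triangle _ _ _
          simp only [mem_ball]
          linarith
        rw [hempty]
        simp
    rw [integral_div, hI]
    rw [div_le_iff₀ hVpos]
    exact hbound
  · -- upper bound
    have hAvol : volume (ball (0:Euc d) (R + r)) < ⊤ := measure_ball_lt_top
    have hint : ∀ C ∈ F, IntegrableOn
        (fun x => ({x' : Euc d | (C ∩ ball x' r).Nonempty}.indicator (fun _ => (1:ℝ)) x))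
        (ball (0:Euc d) (R + r)) volume := fun C hC =>
      (integrableOn_const hAvol.ne).indicator (hWmeas C)
    have hI : ∫ x in ball (0:Euc d) (R + r), (compCountStar 𝒞 (ball x r) : ℝ) =
        ∑ C ∈ F, (volume ({x' : Euc d | (C ∩ ball x' r).Nonempty} ∩ ball (0:Euc d) (R + r))).toReal := by
      rw [integral_congr_ae (Eventually.of_forall hcountStarR)]
      rw [integral_finset_sum F hint]
      refine Finset.sum_congr rfl fun C hC => ?_
      rw [integral_indicator_const (1:ℝ) (hWmeas C), measureReal_def, Measure.restrict_apply (hWmeas C),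
        smul_eq_mul, mul_one]
    have hbound : (compCount 𝒞 (ball (0:Euc d) R) : ℝ) * V ≤
        ∑ C ∈ F, (volume ({x' : Euc d | (C ∩ ball x' r).Nonempty} ∩ ball (0:Euc d) (R + r))).toReal := by
      rw [hNV]
      calc ∑ C ∈ F.filter (fun C => C ⊆ ball (0:Euc d) R), V
          ≤ ∑ C ∈ F.filter (fun C => C ⊆ ball (0:Euc d) R),
              (volume ({x' : Euc d | (C ∩ ball x' r).Nonempty} ∩ ball (0:Euc d) (R + r))).toReal := by
            apply Finset.sum_le_sum
            intro C hC
            rw [Finset.mem_filter] at hC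
            obtain ⟨hCF, hCR⟩ := hC
            obtain ⟨p, hp⟩ := aux_comp_nonempty ((hmemF C).mp hCF)
            have hsub : ball p r ⊆
                {x' : Euc d | (C ∩ ball x' r).Nonempty} ∩ ball (0:Euc d) (R + r) := by
              intro x hx
              simp only [mem_ball] at hx
              constructor
              · exact ⟨p, hp, by simp only [mem_ball]; rwa [dist_comm]⟩
              · have h1 : dist p 0 < R := by simpa [mem_ball] using hCR hp
                have h2 : dist x 0 ≤ dist x p + dist p 0 := dist_triangle _ _ _
                simp only [mem_ball]
                linarith
            calc V = (volume (ball p r)).toReal := by rw [hV, hballvol p]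
              _ ≤ (volume ({x' : Euc d | (C ∩ ball x' r).Nonempty} ∩ ball (0:Euc d) (R + r))).toReal := by
                  apply ENNReal.toReal_mono
                  · exact ((measure_mono (inter_subset_right)).trans_lt hAvol).ne
                  · exact measure_mono hsub
        _ ≤ ∑ C ∈ F, (volume ({x' : Euc d | (C ∩ ball x' r).Nonempty} ∩ ball (0:Euc d) (R + r))).toReal :=
            Finset.sum_le_sum_of_subset_of_nonneg (Finset.filter_subset _ _)
              (fun C _ _ => ENNReal.toReal_nonneg)
    rw [integral_div, hI]
    rw [le_div_iff₀ hVpos]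
    exact hbound
end

section
/- Let P ⊂ ℝ^d be a locally finite set, let 0 < α < r, let x ∈ ℝ^d, and set 𝒫 = ⋃_{p∈P} B̄(p, α). Then: (i) every connected component of 𝒫 that intersects B̄(x, r) but is not contained in the interior of B̄(x, r) contains a point p ∈ P with r − α ≤ ‖p − x‖ ≤ r + α; and consequently (ii) for every topological space Z, 𝒩*(𝒫, B̄(x, r); [Z]) ≤ 𝒩(𝒫, B̄(x, r); [Z]) + #{ p ∈ P : r − α ≤ ‖p − x‖ ≤ r + α }. -/
open Metric MeasureTheory Filter Topology

/-- Components of the Boolean model meeting `B̄(x,r)` but not contained in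
its interior contain a point of `P` in the annulus `r - α ≤ ‖p - x‖ ≤ r + α`; consequently
the boundary count `𝒩*` exceeds `𝒩` by at most the number of points of `P` in that annulus. -/
theorem stmt_14 {d : ℕ} (P : Set (Euc d))
    (hP : ∀ s : Set (Euc d), Bornology.IsBounded s → (P ∩ s).Finite)
    (α r : ℝ) (hα : 0 < α) (hαr : α < r) (x : Euc d)
    (Z : Type*) [TopologicalSpace Z] :
    (∀ C : Set (Euc d), IsCompOf (nbhd P α) C → (C ∩ closedBall x r).Nonempty →
      ¬ C ⊆ interior (closedBall x r) →
      ∃ p ∈ P, p ∈ C ∧ r - α ≤ dist p x ∧ dist p x ≤ r + α) ∧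
    compCountTypeStar (nbhd P α) (closedBall x r) Z ≤
      compCountType (nbhd P α) (closedBall x r) Z +
        {p ∈ P | r - α ≤ dist p x ∧ dist p x ≤ r + α}.ncard := by
  have hr : (0:ℝ) < r := hα.trans hαr
  set Y := nbhd P α with hYdef
  -- every point of Y lies within α of a point of P whose ball sits in Y
  have key : ∀ c ∈ Y, ∃ p ∈ P, dist c p ≤ α ∧ closedBall p α ⊆ Y := by
    intro c hc
    simp only [hYdef, nbhd, Set.mem_iUnion] at hc
    obtain ⟨p, hp, hcp⟩ := hc
    refine ⟨p, hp, by simpa [mem_closedBall] using hcp, fun z hz => ?_⟩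
    simp only [hYdef, nbhd, Set.mem_iUnion]
    exact ⟨p, hp, hz⟩
  -- two components with a common point coincide
  have comp_eq : ∀ C₁ C₂ : Set (Euc d), IsCompOf Y C₁ → IsCompOf Y C₂ →
      ∀ p, p ∈ C₁ → p ∈ C₂ → C₁ = C₂ := by
    rintro _ _ ⟨a, _, rfl⟩ ⟨b, _, rfl⟩ p hp1 hp2
    rw [connectedComponentIn_eq hp1, connectedComponentIn_eq hp2]
  -- a point of Y has its covering point of P in the same component
  have key2 : ∀ (x₀ : Euc d), x₀ ∈ Y → ∀ c ∈ connectedComponentIn Y x₀,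
      ∃ p ∈ P, dist c p ≤ α ∧ p ∈ connectedComponentIn Y x₀ := by
    intro x₀ hx₀ c hcC
    obtain ⟨p, hpP, hdist, hball⟩ := key c (connectedComponentIn_subset Y x₀ hcC)
    refine ⟨p, hpP, hdist, ?_⟩
    have h1 : closedBall p α ⊆ connectedComponentIn Y c :=
      (convex_closedBall p α).isPreconnected.subset_connectedComponentIn
        (by simpa [mem_closedBall, dist_comm] using hdist) hball
    rw [← connectedComponentIn_eq hcC] at h1
    exact h1 (mem_closedBall_self hα.le)
  have part1 : ∀ C : Set (Euc d), IsCompOf Y C → (C ∩ closedBall x r).Nonempty →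
      ¬ C ⊆ interior (closedBall x r) →
      ∃ p ∈ P, p ∈ C ∧ r - α ≤ dist p x ∧ dist p x ≤ r + α := by
    intro C hC hne hnsub
    obtain ⟨x₀, hx₀, rfl⟩ := hC
    obtain ⟨a, haC, har⟩ := hne
    obtain ⟨b, hbC, hbr⟩ := Set.not_subset.mp hnsub
    rw [interior_closedBall x hr.ne'] at hbr
    have hconn : IsPreconnected (connectedComponentIn Y x₀) :=
      isPreconnected_connectedComponentIn
    have hcont : ContinuousOn (fun z : Euc d => dist z x) (connectedComponentIn Y x₀) :=
      (continuous_id.dist continuous_const).continuousOn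
    have hmem : r ∈ (fun z : Euc d => dist z x) '' connectedComponentIn Y x₀ := by
      apply hconn.intermediate_value haC hbC hcont
      exact ⟨by simpa [mem_closedBall] using har, le_of_not_gt (by simpa [mem_ball] using hbr)⟩
    obtain ⟨c, hcC, hcr⟩ := hmem
    obtain ⟨p, hpP, hdist, hpC⟩ := key2 x₀ hx₀ c hcC
    have t1 := dist_triangle p c x
    have t2 := dist_triangle c p x
    have hdc : dist p c = dist c p := dist_comm p c
    have hcr' : dist c x = r := hcr
    exact ⟨p, hpP, hpC, by linarith, by linarith⟩
  refine ⟨part1, ?_⟩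
  -- notation for the three sets
  set A : Set (Euc d) := {p ∈ P | r - α ≤ dist p x ∧ dist p x ≤ r + α} with hA
  set S : Set (Set (Euc d)) := {C | IsCompOf Y C ∧ C ⊆ interior (closedBall x r) ∧
    Nonempty (ContinuousMap.HomotopyEquiv C Z)} with hS
  set T : Set (Set (Euc d)) := {C | IsCompOf Y C ∧ (C ∩ closedBall x r).Nonempty ∧
    Nonempty (ContinuousMap.HomotopyEquiv C Z)} with hT
  -- every member of T contains a point of P within r + α of x
  have hTpt : ∀ C : Set (Euc d), ∃ p, C ∈ T → p ∈ P ∧ dist p x ≤ r + α ∧ p ∈ C := by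
    intro C
    by_cases hCT : C ∈ T
    · obtain ⟨⟨x₀, hx₀, rfl⟩, ⟨c, hcC, hcr⟩, -⟩ := hCT
      obtain ⟨p, hpP, hdist, hpC⟩ := key2 x₀ hx₀ c hcC
      have t1 := dist_triangle p c x
      have hdc : dist p c = dist c p := dist_comm p c
      have : dist c x ≤ r := by simpa [mem_closedBall] using hcr
      exact ⟨p, fun _ => ⟨hpP, by linarith, hpC⟩⟩
    · exact ⟨x, fun h => absurd h hCT⟩
  choose f hf using hTpt
  have hfinj : Set.InjOn f T := by
    intro C₁ h₁ C₂ h₂ hfe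
    obtain ⟨_, _, hp₁⟩ := hf C₁ h₁
    obtain ⟨_, _, hp₂⟩ := hf C₂ h₂
    exact comp_eq C₁ C₂ h₁.1 h₂.1 (f C₁) hp₁ (hfe ▸ hp₂)
  have hTfin : T.Finite := by
    apply Set.Finite.of_finite_image ?_ hfinj
    apply (hP (closedBall x (r + α)) isBounded_closedBall).subset
    rintro _ ⟨C, hC, rfl⟩
    obtain ⟨h1, h2, -⟩ := hf C hC
    exact ⟨h1, by simpa [mem_closedBall] using h2⟩
  have hAfin : A.Finite := by
    apply (hP (closedBall x (r + α)) isBounded_closedBall).subset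
    rintro p ⟨hp, -, h2⟩
    exact ⟨hp, by simpa [mem_closedBall] using h2⟩
  have hST : S ⊆ T := by
    rintro C ⟨hC, hsub, hhe⟩
    refine ⟨hC, ?_, hhe⟩
    obtain ⟨x₀, hx₀, rfl⟩ := hC
    have hx₀C : x₀ ∈ connectedComponentIn Y x₀ := mem_connectedComponentIn hx₀
    exact ⟨x₀, hx₀C, interior_subset (hsub hx₀C)⟩
  -- members of T \ S inject into A
  have hTSpt : ∀ C : Set (Euc d), ∃ p, C ∈ T \ S → p ∈ A ∧ p ∈ C := by
    intro C
    by_cases hCT : C ∈ T \ S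
    · obtain ⟨⟨hC, hne, hhe⟩, hnS⟩ := hCT
      have hnsub : ¬ C ⊆ interior (closedBall x r) := fun h => hnS ⟨hC, h, hhe⟩
      obtain ⟨p, hpP, hpC, h1, h2⟩ := part1 C hC hne hnsub
      exact ⟨p, fun _ => ⟨⟨hpP, h1, h2⟩, hpC⟩⟩
    · exact ⟨x, fun h => absurd h hCT⟩
  choose g hg using hTSpt
  have hcard1 : (T \ S).ncard ≤ A.ncard := by
    apply Set.ncard_le_ncard_of_injOn g (fun C hC => (hg C hC).1) ?_ hAfin
    intro C₁ h₁ C₂ h₂ hge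
    exact comp_eq C₁ C₂ h₁.1.1 h₂.1.1 (g C₁) (hg C₁ h₁).2 (hge ▸ (hg C₂ h₂).2)
  have hcard2 : T.ncard ≤ S.ncard + (T \ S).ncard := by
    conv_lhs => rw [← Set.union_diff_cancel hST]
    exact Set.ncard_union_le S (T \ S)
  calc compCountTypeStar Y (closedBall x r) Z = T.ncard := rfl
    _ ≤ S.ncard + (T \ S).ncard := hcard2
    _ ≤ S.ncard + A.ncard := by omega
    _ = _ := rfl
end
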